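/- (Inequality (b) in the proof of Corollary 3.) Let U, V, X, S, Y, Z be random variables taking values in finite sets on a common probability space, and assume the Markov chain (U,V) → (X,S) → (Y,Z), i.e., (U,V) and (Y,Z) are conditionally independent given (X,S). If in addition I(X; Y | U, S, V) ≥ I(X; Z | U, S, V), then I(V; Y | U, S) - I(V; Z | U, S) ≤ I(X; Y | U, S) - I(X; Z | U, S). -/

import Mathlib

open MeasureTheory Real

/-- Shannon entropy of a finitely-valued random variable `X` under measure `μ`. -/
noncomputable def ent {Ω α : Type*} [MeasurableSpace Ω] [Fintype α]
    (μ : Measure Ω) (X : Ω → α) : ℝ :=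
  ∑ x : α, Real.negMulLog (μ (X ⁻¹' {x})).toReal

/-- Conditional Shannon entropy `H(X | Y) = H(X, Y) - H(Y)`. -/
noncomputable def condEnt {Ω α β : Type*} [MeasurableSpace Ω] [Fintype α] [Fintype β]
    (μ : Measure Ω) (X : Ω → α) (Y : Ω → β) : ℝ :=
  ent μ (fun ω => (X ω, Y ω)) - ent μ Y

/-- Mutual information `I(X; Y) = H(X) + H(Y) - H(X, Y)`. -/
noncomputable def mutInfo {Ω α β : Type*} [MeasurableSpace Ω] [Fintype α] [Fintype β]
    (μ : Measure Ω) (X : Ω → α) (Y : Ω → β) : ℝ :=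
  ent μ X + ent μ Y - ent μ (fun ω => (X ω, Y ω))

/-- Conditional mutual information `I(X; Y | Z) = H(X|Z) + H(Y|Z) - H(X,Y|Z)`. -/
noncomputable def condMutInfo {Ω α β γ : Type*} [MeasurableSpace Ω]
    [Fintype α] [Fintype β] [Fintype γ]
    (μ : Measure Ω) (X : Ω → α) (Y : Ω → β) (Z : Ω → γ) : ℝ :=
  condEnt μ X Z + condEnt μ Y Z - condEnt μ (fun ω => (X ω, Y ω)) Z

/-- `A` and `B` are conditionally independent given `C` (elementary form, for
finitely-valued random variables): the Markov chain `A → C → B`. -/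
def CondIndepFin {Ω α β γ : Type*} [MeasurableSpace Ω]
    (μ : MeasureTheory.Measure Ω) (A : Ω → α) (B : Ω → β) (C : Ω → γ) : Prop :=
  ∀ a b c, μ (A ⁻¹' {a} ∩ B ⁻¹' {b} ∩ C ⁻¹' {c}) * μ (C ⁻¹' {c}) =
    μ (A ⁻¹' {a} ∩ C ⁻¹' {c}) * μ (B ⁻¹' {b} ∩ C ⁻¹' {c})

section Aux
variable {Ω : Type*} [MeasurableSpace Ω] (μ : Measure Ω)

lemma ent_comp_inj {α β : Type*} [Fintype α] [Fintype β] (f : α → β)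
    (hf : Function.Injective f) (T : Ω → α) :
    ent μ (fun ω => f (T ω)) = ent μ T := by
  classical
  unfold ent
  rw [← Finset.sum_subset (Finset.subset_univ (Finset.univ.image f))]
  · rw [Finset.sum_image (fun a _ a' _ h => hf h)]
    refine Finset.sum_congr rfl fun a _ => ?_
    have : (fun ω => f (T ω)) ⁻¹' {f a} = T ⁻¹' {a} := by
      ext ω; simp [hf.eq_iff]
    rw [this]
  · intro b _ hb
    have : (fun ω => f (T ω)) ⁻¹' {b} = ∅ := by
      ext ω
      simp only [Set.mem_preimage, Set.mem_singleton_iff, Set.mem_empty_iff_false, iff_false]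
      intro h
      exact hb (Finset.mem_image.2 ⟨T ω, Finset.mem_univ _, h⟩)
    rw [this]
    simp

lemma prod_snd_inj {δ γ γ' : Type*} {f : γ → γ'} (hf : Function.Injective f) :
    Function.Injective (fun p : δ × γ => (p.1, f p.2)) := fun p q h => by
  simp only [Prod.ext_iff] at h ⊢
  exact ⟨h.1, hf h.2⟩

lemma condMutInfo_comp_inj_right {α β γ γ' : Type*}
    [Fintype α] [Fintype β] [Fintype γ] [Fintype γ']
    (A : Ω → α) (B : Ω → β) (C : Ω → γ) (f : γ → γ') (hf : Function.Injective f)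
    (C' : Ω → γ') (hC' : ∀ ω, C' ω = f (C ω)) :
    condMutInfo μ A B C' = condMutInfo μ A B C := by
  have hCe : C' = fun ω => f (C ω) := funext hC'
  rw [hCe]
  unfold condMutInfo condEnt
  have h1 : ent μ (fun ω => (A ω, f (C ω))) = ent μ (fun ω => (A ω, C ω)) :=
    by
    exact ent_comp_inj μ _ (prod_snd_inj hf)
      (fun ω => (A ω, C ω))
  have h2 : ent μ (fun ω => (B ω, f (C ω))) = ent μ (fun ω => (B ω, C ω)) :=
    by
    exact ent_comp_inj μ _ (prod_snd_inj hf)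
      (fun ω => (B ω, C ω))
  have h3 : ent μ (fun ω => ((A ω, B ω), f (C ω))) = ent μ (fun ω => ((A ω, B ω), C ω)) :=
    by
    exact ent_comp_inj μ _ (prod_snd_inj hf)
      (fun ω => ((A ω, B ω), C ω))
  have h4 : ent μ (fun ω => f (C ω)) = ent μ C := ent_comp_inj μ f hf C
  rw [h1, h2, h3, h4]

/-- chain-rule style difference identity (pure relabeling arithmetic). -/
lemma cmi_chain_diff {α β γ δ : Type*} [Fintype α] [Fintype β] [Fintype γ] [Fintype δ]
    (V : Ω → α) (X : Ω → β) (Y : Ω → γ) (W : Ω → δ) :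
    condMutInfo μ V Y W - condMutInfo μ X Y W =
    condMutInfo μ V Y (fun ω => (W ω, X ω)) - condMutInfo μ X Y (fun ω => (W ω, V ω)) := by
  unfold condMutInfo condEnt
  -- relabel equalities
  have E1 : ent μ (fun ω => (X ω, (W ω, V ω))) = ent μ (fun ω => (V ω, (W ω, X ω))) :=
    ent_comp_inj μ (fun p : α × δ × β => (p.2.2, (p.2.1, p.1)))
      (fun p q h => by
        simp only [Prod.ext_iff] at h ⊢
        exact ⟨h.2.2, h.2.1, h.1⟩)
      (fun ω => (V ω, (W ω, X ω)))
  have E2 : ent μ (fun ω => ((X ω, Y ω), (W ω, V ω)))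
      = ent μ (fun ω => ((V ω, Y ω), (W ω, X ω))) :=
    ent_comp_inj μ (fun p : (α × γ) × δ × β => ((p.2.2, p.1.2), (p.2.1, p.1.1)))
      (fun p q h => by
        simp only [Prod.ext_iff] at h ⊢
        exact ⟨⟨h.2.2, h.1.2⟩, h.2.1, h.1.1⟩)
      (fun ω => ((V ω, Y ω), (W ω, X ω)))
  have E3 : ent μ (fun ω => (W ω, V ω)) = ent μ (fun ω => (V ω, W ω)) :=
    ent_comp_inj μ (fun p : α × δ => (p.2, p.1))
      (fun p q h => by simp only [Prod.ext_iff] at h ⊢; exact ⟨h.2, h.1⟩)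
      (fun ω => (V ω, W ω))
  have E4 : ent μ (fun ω => (Y ω, (W ω, V ω))) = ent μ (fun ω => ((V ω, Y ω), W ω)) :=
    ent_comp_inj μ (fun p : (α × γ) × δ => (p.1.2, (p.2, p.1.1)))
      (fun p q h => by simp only [Prod.ext_iff] at h ⊢; exact ⟨⟨h.2.2, h.1⟩, h.2.1⟩)
      (fun ω => ((V ω, Y ω), W ω))
  have E5 : ent μ (fun ω => (W ω, X ω)) = ent μ (fun ω => (X ω, W ω)) :=
    ent_comp_inj μ (fun p : β × δ => (p.2, p.1))
      (fun p q h => by simp only [Prod.ext_iff] at h ⊢; exact ⟨h.2, h.1⟩)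
      (fun ω => (X ω, W ω))
  have E6 : ent μ (fun ω => (Y ω, (W ω, X ω))) = ent μ (fun ω => ((X ω, Y ω), W ω)) :=
    ent_comp_inj μ (fun p : (β × γ) × δ => (p.1.2, (p.2, p.1.1)))
      (fun p q h => by simp only [Prod.ext_iff] at h ⊢; exact ⟨⟨h.2.2, h.1⟩, h.2.1⟩)
      (fun ω => ((X ω, Y ω), W ω))
  linarith [E1, E2, E3, E4, E5, E6]

lemma meas_sum {β : Type*} [Fintype β] [MeasurableSpace β] [MeasurableSingletonClass β]
    (B : Ω → β) (hB : Measurable B) (t : Set Ω) :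
    ∑ b : β, μ (t ∩ B ⁻¹' {b}) = μ t := by
  have h1 : ∀ b : β, μ (t ∩ B ⁻¹' {b}) = μ.restrict t (B ⁻¹' {b}) := by
    intro b
    rw [Measure.restrict_apply (hB (measurableSet_singleton b)), Set.inter_comm]
  simp_rw [h1]
  rw [sum_measure_preimage_singleton Finset.univ
    (fun b _ => hB (measurableSet_singleton b))]
  simp

lemma negMulLog_sum_expand {ι : Type*} (s : Finset ι) (f : ι → ℝ) (x : ℝ)
    (hx : ∑ i ∈ s, f i = x) :
    Real.negMulLog x = ∑ i ∈ s, -(f i * Real.log x) := by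
  subst hx
  rw [Real.negMulLog, neg_mul, Finset.sum_mul]
  exact (Finset.sum_neg_distrib _).symm

/-- Marginalize the first component of the middle (B) variable. -/
lemma ci_fst {α β β' γ : Type*} [Fintype β'] [MeasurableSpace β'] [MeasurableSingletonClass β']
    {A : Ω → α} {B : Ω → β} {B' : Ω → β'} {C : Ω → γ} (hB' : Measurable B')
    (h : CondIndepFin μ A (fun ω => (B ω, B' ω)) C) :
    CondIndepFin μ A B C := by
  intro a b c
  have hsum := fun b' : β' => h a (b, b') c
  have e1 : ∀ b' : β', A ⁻¹' {a} ∩ (fun ω => (B ω, B' ω)) ⁻¹' {(b, b')} ∩ C ⁻¹' {c}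
      = (A ⁻¹' {a} ∩ B ⁻¹' {b} ∩ C ⁻¹' {c}) ∩ B' ⁻¹' {b'} := by
    intro b'; ext ω; simp [Prod.ext_iff]; tauto
  have e2 : ∀ b' : β', (fun ω => (B ω, B' ω)) ⁻¹' {(b, b')} ∩ C ⁻¹' {c}
      = (B ⁻¹' {b} ∩ C ⁻¹' {c}) ∩ B' ⁻¹' {b'} := by
    intro b'; ext ω; simp [Prod.ext_iff]; tauto
  have key : (∑ b' : β', μ ((A ⁻¹' {a} ∩ B ⁻¹' {b} ∩ C ⁻¹' {c}) ∩ B' ⁻¹' {b'})) * μ (C ⁻¹' {c})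
      = μ (A ⁻¹' {a} ∩ C ⁻¹' {c}) * ∑ b' : β', μ ((B ⁻¹' {b} ∩ C ⁻¹' {c}) ∩ B' ⁻¹' {b'}) := by
    rw [Finset.sum_mul, Finset.mul_sum]
    refine Finset.sum_congr rfl fun b' _ => ?_
    rw [← e1 b', ← e2 b']
    exact hsum b'
  rwa [meas_sum μ B' hB', meas_sum μ B' hB'] at key

/-- Marginalize the second component of the middle (B) variable. -/
lemma ci_snd {α β β' γ : Type*} [Fintype β] [MeasurableSpace β] [MeasurableSingletonClass β]
    {A : Ω → α} {B : Ω → β} {B' : Ω → β'} {C : Ω → γ} (hB : Measurable B)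
    (h : CondIndepFin μ A (fun ω => (B ω, B' ω)) C) :
    CondIndepFin μ A B' C := by
  intro a b' c
  have hsum := fun b : β => h a (b, b') c
  have e1 : ∀ b : β, A ⁻¹' {a} ∩ (fun ω => (B ω, B' ω)) ⁻¹' {(b, b')} ∩ C ⁻¹' {c}
      = (A ⁻¹' {a} ∩ B' ⁻¹' {b'} ∩ C ⁻¹' {c}) ∩ B ⁻¹' {b} := by
    intro b; ext ω; simp [Prod.ext_iff]; tauto
  have e2 : ∀ b : β, (fun ω => (B ω, B' ω)) ⁻¹' {(b, b')} ∩ C ⁻¹' {c}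
      = (B' ⁻¹' {b'} ∩ C ⁻¹' {c}) ∩ B ⁻¹' {b} := by
    intro b; ext ω; simp [Prod.ext_iff]; tauto
  have key : (∑ b : β, μ ((A ⁻¹' {a} ∩ B' ⁻¹' {b'} ∩ C ⁻¹' {c}) ∩ B ⁻¹' {b})) * μ (C ⁻¹' {c})
      = μ (A ⁻¹' {a} ∩ C ⁻¹' {c}) * ∑ b : β, μ ((B' ⁻¹' {b'} ∩ C ⁻¹' {c}) ∩ B ⁻¹' {b}) := by
    rw [Finset.sum_mul, Finset.mul_sum]
    refine Finset.sum_congr rfl fun b _ => ?_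
    rw [← e1 b, ← e2 b]
    exact hsum b
  rwa [meas_sum μ B hB, meas_sum μ B hB] at key

/-- Move part of the A-side variable into the conditioning. -/
lemma ci_transfer {υ α β γ : Type*} [Fintype α] [MeasurableSpace α] [MeasurableSingletonClass α]
    [IsFiniteMeasure μ]
    {U' : Ω → υ} {A : Ω → α} {B : Ω → β} {C : Ω → γ}
    (hA : Measurable A)
    (h : CondIndepFin μ (fun ω => (U' ω, A ω)) B C) :
    CondIndepFin μ A B (fun ω => (U' ω, C ω)) := by
  rintro a b ⟨u, c⟩
  set D : Set Ω := U' ⁻¹' {u} ∩ C ⁻¹' {c} with hD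
  have hDset : (fun ω => (U' ω, C ω)) ⁻¹' {(u, c)} = D := by
    ext ω; simp [hD, Prod.ext_iff]
  rw [hDset]
  set m := μ (C ⁻¹' {c}) with hm
  set gm := μ (B ⁻¹' {b} ∩ C ⁻¹' {c}) with hgm
  -- eq1 : α' * m = β' * gm
  have eq1 : μ (A ⁻¹' {a} ∩ B ⁻¹' {b} ∩ D) * m = μ (A ⁻¹' {a} ∩ D) * gm := by
    have := h (u, a) b c
    have s1 : (fun ω => (U' ω, A ω)) ⁻¹' {(u, a)} ∩ B ⁻¹' {b} ∩ C ⁻¹' {c}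
        = A ⁻¹' {a} ∩ B ⁻¹' {b} ∩ D := by
      ext ω; simp [hD, Prod.ext_iff]; tauto
    have s2 : (fun ω => (U' ω, A ω)) ⁻¹' {(u, a)} ∩ C ⁻¹' {c} = A ⁻¹' {a} ∩ D := by
      ext ω; simp [hD, Prod.ext_iff]; tauto
    rwa [s1, s2] at this
  -- eq2 : δ' * m = ε' * gm, by summing over a'
  have eq2 : μ (B ⁻¹' {b} ∩ D) * m = μ D * gm := by
    have hsum := fun a' : α => h (u, a') b c
    have e1 : ∀ a' : α, (fun ω => (U' ω, A ω)) ⁻¹' {(u, a')} ∩ B ⁻¹' {b} ∩ C ⁻¹' {c}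
        = (B ⁻¹' {b} ∩ D) ∩ A ⁻¹' {a'} := by
      intro a'; ext ω; simp [hD, Prod.ext_iff]; tauto
    have e2 : ∀ a' : α, (fun ω => (U' ω, A ω)) ⁻¹' {(u, a')} ∩ C ⁻¹' {c}
        = D ∩ A ⁻¹' {a'} := by
      intro a'; ext ω; simp [hD, Prod.ext_iff]; tauto
    have key : (∑ a' : α, μ ((B ⁻¹' {b} ∩ D) ∩ A ⁻¹' {a'})) * m
        = (∑ a' : α, μ (D ∩ A ⁻¹' {a'})) * gm := by
      rw [Finset.sum_mul, Finset.sum_mul]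
      refine Finset.sum_congr rfl fun a' _ => ?_
      rw [← e1 a', ← e2 a']
      exact hsum a'
    rwa [meas_sum μ A hA, meas_sum μ A hA] at key
  -- target : α' * ε' = β' * δ'
  by_cases hm0 : m = 0
  · have h1 : μ (A ⁻¹' {a} ∩ B ⁻¹' {b} ∩ D) = 0 := by
      refine le_antisymm ?_ zero_le
      rw [← hm0, hm]
      exact measure_mono (by intro ω hw; simp [hD] at hw ⊢; tauto)
    have h2 : μ (B ⁻¹' {b} ∩ D) = 0 := by
      refine le_antisymm ?_ zero_le
      rw [← hm0, hm]
      exact measure_mono (by intro ω hw; simp [hD] at hw ⊢; tauto)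
    rw [h1, h2, zero_mul, mul_zero]
  · have hmt : m ≠ ⊤ := by rw [hm]; exact measure_ne_top μ _
    rw [← ENNReal.mul_left_inj hm0 hmt]
    calc μ (A ⁻¹' {a} ∩ B ⁻¹' {b} ∩ D) * μ D * m
        = (μ (A ⁻¹' {a} ∩ B ⁻¹' {b} ∩ D) * m) * μ D := by ring
      _ = (μ (A ⁻¹' {a} ∩ D) * gm) * μ D := by rw [eq1]
      _ = μ (A ⁻¹' {a} ∩ D) * (μ D * gm) := by ring
      _ = μ (A ⁻¹' {a} ∩ D) * (μ (B ⁻¹' {b} ∩ D) * m) := by rw [eq2]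
      _ = μ (A ⁻¹' {a} ∩ D) * μ (B ⁻¹' {b} ∩ D) * m := by ring

variable [IsFiniteMeasure μ]

lemma condMutInfo_eq_zero_of_ci {α β γ : Type*}
    [Fintype α] [Fintype β] [Fintype γ]
    [MeasurableSpace α] [MeasurableSingletonClass α]
    [MeasurableSpace β] [MeasurableSingletonClass β]
    [MeasurableSpace γ] [MeasurableSingletonClass γ]
    (A : Ω → α) (B : Ω → β) (C : Ω → γ)
    (hA : Measurable A) (hB : Measurable B) (hC : Measurable C)
    (h : CondIndepFin μ A B C) :
    condMutInfo μ A B C = 0 := by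
  set p3 : α → β → γ → ℝ := fun a b c => (μ (A ⁻¹' {a} ∩ B ⁻¹' {b} ∩ C ⁻¹' {c})).toReal with hp3
  set pAC : α → γ → ℝ := fun a c => (μ (A ⁻¹' {a} ∩ C ⁻¹' {c})).toReal with hpAC
  set pBC : β → γ → ℝ := fun b c => (μ (B ⁻¹' {b} ∩ C ⁻¹' {c})).toReal with hpBC
  set pC : γ → ℝ := fun c => (μ (C ⁻¹' {c})).toReal with hpC
  -- marginal sums
  have f1 : ∀ a c, ∑ b : β, p3 a b c = pAC a c := by
    intro a c
    have : ∀ b : β, A ⁻¹' {a} ∩ B ⁻¹' {b} ∩ C ⁻¹' {c}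
        = (A ⁻¹' {a} ∩ C ⁻¹' {c}) ∩ B ⁻¹' {b} := by
      intro b; ext ω; simp [Set.mem_inter_iff]; tauto
    simp_rw [hp3, this]
    rw [← ENNReal.toReal_sum (fun b _ => measure_ne_top μ _)]
    rw [meas_sum μ B hB]
  have f2 : ∀ b c, ∑ a : α, p3 a b c = pBC b c := by
    intro b c
    have : ∀ a : α, A ⁻¹' {a} ∩ B ⁻¹' {b} ∩ C ⁻¹' {c}
        = (B ⁻¹' {b} ∩ C ⁻¹' {c}) ∩ A ⁻¹' {a} := by
      intro a; ext ω; simp [Set.mem_inter_iff]; tauto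
    simp_rw [hp3, this]
    rw [← ENNReal.toReal_sum (fun a _ => measure_ne_top μ _)]
    rw [meas_sum μ A hA]
  have f3 : ∀ c, ∑ a : α, pAC a c = pC c := by
    intro c
    have : ∀ a : α, A ⁻¹' {a} ∩ C ⁻¹' {c} = C ⁻¹' {c} ∩ A ⁻¹' {a} := by
      intro a; ext ω; simp [Set.mem_inter_iff]; tauto
    simp_rw [hpAC, this]
    rw [← ENNReal.toReal_sum (fun a _ => measure_ne_top μ _)]
    rw [meas_sum μ A hA]
  -- conditional independence in ℝ
  have hci : ∀ a b c, p3 a b c * pC c = pAC a c * pBC b c := by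
    intro a b c
    have := h a b c
    have := congrArg ENNReal.toReal this
    rwa [ENNReal.toReal_mul, ENNReal.toReal_mul] at this
  -- nonnegativity / monotonicity
  have hm1 : ∀ a b c, p3 a b c ≤ pAC a c := fun a b c =>
    ENNReal.toReal_mono (measure_ne_top μ _)
      (measure_mono (by intro ω hw; simp only [Set.mem_inter_iff, Set.mem_preimage] at hw ⊢; tauto))
  have hm2 : ∀ a b c, p3 a b c ≤ pBC b c := fun a b c =>
    ENNReal.toReal_mono (measure_ne_top μ _)
      (measure_mono (by intro ω hw; simp only [Set.mem_inter_iff, Set.mem_preimage] at hw ⊢; tauto))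
  have hm3 : ∀ a b c, p3 a b c ≤ pC c := fun a b c =>
    ENNReal.toReal_mono (measure_ne_top μ _)
      (measure_mono (by intro ω hw; simp only [Set.mem_inter_iff, Set.mem_preimage] at hw ⊢; tauto))
  have hnn : ∀ a b c, 0 ≤ p3 a b c := fun a b c => ENNReal.toReal_nonneg
  -- entropies as sums
  have eABC : ent μ (fun ω => ((A ω, B ω), C ω))
      = ∑ a : α, ∑ b : β, ∑ c : γ, negMulLog (p3 a b c) := by
    unfold ent
    rw [Fintype.sum_prod_type, Fintype.sum_prod_type]
    refine Finset.sum_congr rfl fun a _ => Finset.sum_congr rfl fun b _ =>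
      Finset.sum_congr rfl fun c _ => ?_
    have hs : (fun ω => ((A ω, B ω), C ω)) ⁻¹' {((a, b), c)}
        = A ⁻¹' {a} ∩ B ⁻¹' {b} ∩ C ⁻¹' {c} := by
      ext ω; simp [Prod.ext_iff, Set.mem_inter_iff]
    rw [hs]
  have eAC : ent μ (fun ω => (A ω, C ω)) = ∑ a : α, ∑ c : γ, negMulLog (pAC a c) := by
    unfold ent
    rw [Fintype.sum_prod_type]
    refine Finset.sum_congr rfl fun a _ => Finset.sum_congr rfl fun c _ => ?_
    have hs : (fun ω => (A ω, C ω)) ⁻¹' {(a, c)} = A ⁻¹' {a} ∩ C ⁻¹' {c} := by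
      ext ω; simp [Prod.ext_iff, Set.mem_inter_iff]
    rw [hs]
  have eBC : ent μ (fun ω => (B ω, C ω)) = ∑ b : β, ∑ c : γ, negMulLog (pBC b c) := by
    unfold ent
    rw [Fintype.sum_prod_type]
    refine Finset.sum_congr rfl fun b _ => Finset.sum_congr rfl fun c _ => ?_
    have hs : (fun ω => (B ω, C ω)) ⁻¹' {(b, c)} = B ⁻¹' {b} ∩ C ⁻¹' {c} := by
      ext ω; simp [Prod.ext_iff, Set.mem_inter_iff]
    rw [hs]
  have eC : ent μ C = ∑ c : γ, negMulLog (pC c) := rfl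
  -- expand into triple sums
  have gAC : ∑ a : α, ∑ c : γ, negMulLog (pAC a c)
      = ∑ a : α, ∑ b : β, ∑ c : γ, -(p3 a b c * Real.log (pAC a c)) := by
    refine Finset.sum_congr rfl fun a _ => ?_
    rw [Finset.sum_comm]
    exact Finset.sum_congr rfl fun c _ =>
      negMulLog_sum_expand Finset.univ _ _ (f1 a c)
  have gBC : ∑ b : β, ∑ c : γ, negMulLog (pBC b c)
      = ∑ a : α, ∑ b : β, ∑ c : γ, -(p3 a b c * Real.log (pBC b c)) := by
    have step : ∑ b : β, ∑ c : γ, negMulLog (pBC b c)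
        = ∑ b : β, ∑ c : γ, ∑ a : α, -(p3 a b c * Real.log (pBC b c)) :=
      Finset.sum_congr rfl fun b _ => Finset.sum_congr rfl fun c _ =>
        negMulLog_sum_expand Finset.univ _ _ (f2 b c)
    rw [step]
    rw [show (∑ b : β, ∑ c : γ, ∑ a : α, -(p3 a b c * Real.log (pBC b c)))
        = ∑ b : β, ∑ a : α, ∑ c : γ, -(p3 a b c * Real.log (pBC b c)) from
      Finset.sum_congr rfl fun b _ => Finset.sum_comm]
    exact Finset.sum_comm
  have gC : ∑ c : γ, negMulLog (pC c)
      = ∑ a : α, ∑ b : β, ∑ c : γ, -(p3 a b c * Real.log (pC c)) := by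
    have hAsum : ∀ c, ∑ a : α, ∑ b : β, p3 a b c = pC c := by
      intro c; simp_rw [f1]; exact f3 c
    have step : ∑ c : γ, negMulLog (pC c)
        = ∑ c : γ, ∑ a : α, -((∑ b : β, p3 a b c) * Real.log (pC c)) := by
      refine Finset.sum_congr rfl fun c _ => ?_
      exact negMulLog_sum_expand Finset.univ _ _ (by simp_rw [f1]; exact f3 c)
    rw [step]
    rw [show (∑ c : γ, ∑ a : α, -((∑ b : β, p3 a b c) * Real.log (pC c)))
        = ∑ c : γ, ∑ a : α, ∑ b : β, -(p3 a b c * Real.log (pC c)) from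
      Finset.sum_congr rfl fun c _ => Finset.sum_congr rfl fun a _ => by
        rw [Finset.sum_mul, neg_eq_iff_eq_neg, ← Finset.sum_neg_distrib]
        exact Finset.sum_congr rfl fun b _ => by ring]
    rw [Finset.sum_comm]
    exact Finset.sum_congr rfl fun a _ => Finset.sum_comm
  have gABC : ∑ a : α, ∑ b : β, ∑ c : γ, negMulLog (p3 a b c)
      = ∑ a : α, ∑ b : β, ∑ c : γ, -(p3 a b c * Real.log (p3 a b c)) := by
    simp [Real.negMulLog, neg_mul]
  -- pointwise key identity
  have key : ∀ a b c,
      -(p3 a b c * Real.log (pAC a c)) + -(p3 a b c * Real.log (pBC b c))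
      = -(p3 a b c * Real.log (p3 a b c)) + -(p3 a b c * Real.log (pC c)) := by
    intro a b c
    rcases eq_or_lt_of_le (hnn a b c) with h0 | hpos
    · rw [← h0]; ring
    · have hACpos : 0 < pAC a c := lt_of_lt_of_le hpos (hm1 a b c)
      have hBCpos : 0 < pBC b c := lt_of_lt_of_le hpos (hm2 a b c)
      have hCpos : 0 < pC c := lt_of_lt_of_le hpos (hm3 a b c)
      have hlog : Real.log (p3 a b c) + Real.log (pC c)
          = Real.log (pAC a c) + Real.log (pBC b c) := by
        rw [← Real.log_mul (ne_of_gt hpos) (ne_of_gt hCpos),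
          ← Real.log_mul (ne_of_gt hACpos) (ne_of_gt hBCpos), hci a b c]
      nlinarith [hlog]
  -- assemble
  have hzero : ∑ a : α, ∑ b : β, ∑ c : γ,
      (-(p3 a b c * Real.log (pAC a c)) + -(p3 a b c * Real.log (pBC b c))
        - -(p3 a b c * Real.log (p3 a b c)) - -(p3 a b c * Real.log (pC c))) = 0 :=
    Finset.sum_eq_zero fun a _ => Finset.sum_eq_zero fun b _ =>
      Finset.sum_eq_zero fun c _ => by have := key a b c; linarith
  have hsplit : ∑ a : α, ∑ b : β, ∑ c : γ,
      (-(p3 a b c * Real.log (pAC a c)) + -(p3 a b c * Real.log (pBC b c))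
        - -(p3 a b c * Real.log (p3 a b c)) - -(p3 a b c * Real.log (pC c)))
      = (∑ a : α, ∑ b : β, ∑ c : γ, -(p3 a b c * Real.log (pAC a c)))
        + (∑ a : α, ∑ b : β, ∑ c : γ, -(p3 a b c * Real.log (pBC b c)))
        - (∑ a : α, ∑ b : β, ∑ c : γ, -(p3 a b c * Real.log (p3 a b c)))
        - (∑ a : α, ∑ b : β, ∑ c : γ, -(p3 a b c * Real.log (pC c))) := by
    simp [Finset.sum_add_distrib, Finset.sum_sub_distrib]
  show (ent μ (fun ω => (A ω, C ω)) - ent μ C) + (ent μ (fun ω => (B ω, C ω)) - ent μ C)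
    - (ent μ (fun ω => ((A ω, B ω), C ω)) - ent μ C) = 0
  rw [eABC, eAC, eBC, eC, gAC, gBC, gC, gABC]
  linarith [hzero, hsplit]

end Aux

theorem corollary3_inequality_b
    {Ω 𝒰 𝒱 𝒳 σ 𝒴 𝒵 : Type*} [MeasurableSpace Ω]
    [Fintype 𝒰] [Fintype 𝒱] [Fintype 𝒳] [Fintype σ] [Fintype 𝒴] [Fintype 𝒵]
    [MeasurableSpace 𝒰] [MeasurableSingletonClass 𝒰]
    [MeasurableSpace 𝒱] [MeasurableSingletonClass 𝒱]
    [MeasurableSpace 𝒳] [MeasurableSingletonClass 𝒳]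
    [MeasurableSpace σ] [MeasurableSingletonClass σ]
    [MeasurableSpace 𝒴] [MeasurableSingletonClass 𝒴]
    [MeasurableSpace 𝒵] [MeasurableSingletonClass 𝒵]
    (μ : Measure Ω) [IsProbabilityMeasure μ]
    (U : Ω → 𝒰) (V : Ω → 𝒱) (X : Ω → 𝒳) (S : Ω → σ) (Y : Ω → 𝒴) (Z : Ω → 𝒵)
    (hU : Measurable U) (hV : Measurable V) (hX : Measurable X)
    (hS : Measurable S) (hY : Measurable Y) (hZ : Measurable Z)
    (hMarkov : CondIndepFin μ (fun ω => (U ω, V ω)) (fun ω => (Y ω, Z ω))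
      (fun ω => (X ω, S ω)))
    (hcap : condMutInfo μ X Z (fun ω => (U ω, S ω, V ω))
      ≤ condMutInfo μ X Y (fun ω => (U ω, S ω, V ω)))
    :
    condMutInfo μ V Y (fun ω => (U ω, S ω)) - condMutInfo μ V Z (fun ω => (U ω, S ω))
    ≤ condMutInfo μ X Y (fun ω => (U ω, S ω))
      - condMutInfo μ X Z (fun ω => (U ω, S ω)) := by
  classical
  have hY' : CondIndepFin μ (fun ω => (U ω, V ω)) Y (fun ω => (X ω, S ω)) :=
    ci_fst μ hZ hMarkov
  have hZ' : CondIndepFin μ (fun ω => (U ω, V ω)) Z (fun ω => (X ω, S ω)) :=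
    ci_snd μ hY hMarkov
  have hVY : CondIndepFin μ V Y (fun ω => (U ω, (X ω, S ω))) :=
    ci_transfer μ hV hY'
  have hVZ : CondIndepFin μ V Z (fun ω => (U ω, (X ω, S ω))) :=
    ci_transfer μ hV hZ'
  have hCmeas : Measurable (fun ω => (U ω, (X ω, S ω))) :=
    hU.prodMk (hX.prodMk hS)
  have hz1 : condMutInfo μ V Y (fun ω => (U ω, (X ω, S ω))) = 0 :=
    condMutInfo_eq_zero_of_ci μ V Y _ hV hY hCmeas hVY
  have hz2 : condMutInfo μ V Z (fun ω => (U ω, (X ω, S ω))) = 0 :=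
    condMutInfo_eq_zero_of_ci μ V Z _ hV hZ hCmeas hVZ
  have hinj1 : Function.Injective (fun p : (𝒰 × σ) × 𝒳 => (p.1.1, (p.2, p.1.2))) := by
    intro p q h
    simp only [Prod.ext_iff] at h ⊢
    exact ⟨⟨h.1, h.2.2⟩, h.2.1⟩
  have hinj2 : Function.Injective (fun p : (𝒰 × σ) × 𝒱 => (p.1.1, (p.1.2, p.2))) := by
    intro p q h
    simp only [Prod.ext_iff] at h ⊢
    exact ⟨⟨h.1, h.2.1⟩, h.2.2⟩
  have e1 : condMutInfo μ V Y (fun ω => (U ω, (X ω, S ω)))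
      = condMutInfo μ V Y (fun ω => ((U ω, S ω), X ω)) := by
    exact condMutInfo_comp_inj_right μ V Y (fun ω => ((U ω, S ω), X ω)) _ hinj1
      (fun ω => (U ω, (X ω, S ω))) (fun ω => rfl)
  have e2 : condMutInfo μ V Z (fun ω => (U ω, (X ω, S ω)))
      = condMutInfo μ V Z (fun ω => ((U ω, S ω), X ω)) := by
    exact condMutInfo_comp_inj_right μ V Z (fun ω => ((U ω, S ω), X ω)) _ hinj1
      (fun ω => (U ω, (X ω, S ω))) (fun ω => rfl)
  have e3 : condMutInfo μ X Y (fun ω => (U ω, S ω, V ω))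
      = condMutInfo μ X Y (fun ω => ((U ω, S ω), V ω)) := by
    exact condMutInfo_comp_inj_right μ X Y (fun ω => ((U ω, S ω), V ω)) _ hinj2
      (fun ω => (U ω, S ω, V ω)) (fun ω => rfl)
  have e4 : condMutInfo μ X Z (fun ω => (U ω, S ω, V ω))
      = condMutInfo μ X Z (fun ω => ((U ω, S ω), V ω)) := by
    exact condMutInfo_comp_inj_right μ X Z (fun ω => ((U ω, S ω), V ω)) _ hinj2
      (fun ω => (U ω, S ω, V ω)) (fun ω => rfl)
  have chY : condMutInfo μ V Y (fun ω => (U ω, S ω))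
        - condMutInfo μ X Y (fun ω => (U ω, S ω))
      = condMutInfo μ V Y (fun ω => ((U ω, S ω), X ω))
        - condMutInfo μ X Y (fun ω => ((U ω, S ω), V ω)) := by
    exact cmi_chain_diff μ V X Y (fun ω => (U ω, S ω))
  have chZ : condMutInfo μ V Z (fun ω => (U ω, S ω))
        - condMutInfo μ X Z (fun ω => (U ω, S ω))
      = condMutInfo μ V Z (fun ω => ((U ω, S ω), X ω))
        - condMutInfo μ X Z (fun ω => ((U ω, S ω), V ω)) := by
    exact cmi_chain_diff μ V X Z (fun ω => (U ω, S ω))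
  linarith [hz1, hz2, e1, e2, e3, e4, chY, chZ, hcap]
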